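/- arXiv:1210.3855 — 2 statements merged into one kernel-verified Lean document; each statement's English description precedes it below -/
import Mathlib

section
/- Let R be a Noetherian ring and let N and Q be finitely generated R-modules. Then the length of the direct sum satisfies len_R (N × Q) = len_R N ♯ len_R Q, where ♯ is the natural (Hessenberg) sum of ordinals. (This is the split case of semi-additivity: a split short exact sequence 0 → N → M → Q → 0 satisfies len_R M = len_R Q ♯ len_R N.) -/
namespace Ordinal

/-- Natural (Hessenberg) sum of ordinals, as `Ordinal.nadd` in Mathlib of December 2024
(`Mathlib/SetTheory/Ordinal/NaturalOps.lean`, since removed from Mathlib). -/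
noncomputable def nadd.{w} : Ordinal.{w} → Ordinal.{w} → Ordinal.{w}
  | a, b =>
    max (blsub.{w, w} a fun a' _ => nadd a' b) (blsub.{w, w} b fun b' _ => nadd a b')
termination_by o₁ o₂ => (o₁, o₂)

end Ordinal

infixl:65 " ♯ " => Ordinal.nadd

open Ordinal

/-- The ordinal length of a Noetherian module: the rank of the zero submodule in the
well-founded order of submodules under reverse inclusion, i.e.
`rank N = sup { rank N' + 1 : N ⊊ N' }` and `len M = rank ⊥`. -/
noncomputable def moduleLength (R M : Type*) [Ring R] [AddCommGroup M] [Module R M]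
    [IsNoetherian R M] : Ordinal :=
  IsWellFounded.rank (α := Submodule R M) (· > ·) ⊥

universe u v

theorem nadd_le_iff {a b c : Ordinal} :
    a ♯ b ≤ c ↔ (∀ a' < a, a' ♯ b < c) ∧ (∀ b' < b, a ♯ b' < c) := by
  rw [Ordinal.nadd, max_le_iff, blsub_le_iff, blsub_le_iff]

theorem nadd_lt_nadd_left' {b c : Ordinal} (h : b < c) (a : Ordinal) : a ♯ b < a ♯ c := by
  rw [Ordinal.nadd.eq_1 a c]
  exact lt_of_lt_of_le (lt_blsub (fun b' _ => a ♯ b') b h) (le_max_right _ _)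

theorem nadd_lt_nadd_right' {a b : Ordinal} (h : a < b) (c : Ordinal) : a ♯ c < b ♯ c := by
  rw [Ordinal.nadd.eq_1 b c]
  exact lt_of_lt_of_le (lt_blsub (fun a' _ => a' ♯ c) a h) (le_max_left _ _)

theorem nadd_le_nadd {a b c d : Ordinal} (h1 : a ≤ b) (h2 : c ≤ d) : a ♯ c ≤ b ♯ d := by
  have e1 : a ♯ c ≤ b ♯ c := by
    rcases h1.lt_or_eq with h | rfl
    · exact (nadd_lt_nadd_right' h c).le
    · exact le_rfl
  have e2 : b ♯ c ≤ b ♯ d := by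
    rcases h2.lt_or_eq with h | rfl
    · exact (nadd_lt_nadd_left' h b).le
    · exact le_rfl
  exact e1.trans e2

theorem nadd_lt_nadd_of_lt_of_le {a b c d : Ordinal} (h1 : a < b) (h2 : c ≤ d) :
    a ♯ c < b ♯ d :=
  (nadd_lt_nadd_right' h1 c).trans_le (nadd_le_nadd le_rfl h2)

theorem nadd_lt_nadd_of_le_of_lt {a b c d : Ordinal} (h1 : a ≤ b) (h2 : c < d) :
    a ♯ c < b ♯ d :=
  (nadd_le_nadd h1 le_rfl).trans_lt (nadd_lt_nadd_left' h2 b)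

section Aux

variable {α : Type u} {β : Type u}

/-- Rank is monotone along relation homomorphisms. -/
theorem rank_le_of_relHomAux {r : α → α → Prop} {s : β → β → Prop}
    [IsWellFounded α r] [IsWellFounded β s] {f : α → β}
    (hf : ∀ a b, r a b → s (f a) (f b)) (a : α) :
    IsWellFounded.rank r a ≤ IsWellFounded.rank s (f a) := by
  induction a using IsWellFounded.induction r with
  | ind a IH =>
    rw [IsWellFounded.rank_eq]
    refine Ordinal.iSup_le fun b => ?_
    exact Order.succ_le_of_lt ((IH b b.2).trans_lt
      (IsWellFounded.rank_lt_of_rel (hf b a b.2)))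

variable [Preorder α] [Preorder β] [WellFoundedGT α] [WellFoundedGT β]

theorem rank_gt_antitoneAux {a b : α} (h : a ≤ b) :
    IsWellFounded.rank (α := α) (· > ·) b ≤ IsWellFounded.rank (α := α) (· > ·) a := by
  rw [IsWellFounded.rank_eq]
  refine Ordinal.iSup_le fun c => ?_
  exact Order.succ_le_of_lt (IsWellFounded.rank_lt_of_rel (lt_of_le_of_lt h c.2))

theorem rank_gt_prodAux (p : α × β) :
    IsWellFounded.rank (α := α × β) (· > ·) p =
      IsWellFounded.rank (α := α) (· > ·) p.1 ♯ IsWellFounded.rank (α := β) (· > ·) p.2 := by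
  induction p using IsWellFounded.induction (α := α × β) (· > ·) with
  | ind p IH => ?_
  obtain ⟨a, b⟩ := p
  show IsWellFounded.rank _ (a, b) = IsWellFounded.rank _ a ♯ IsWellFounded.rank _ b
  apply le_antisymm
  · rw [IsWellFounded.rank_eq]
    refine Ordinal.iSup_le fun c => Order.succ_le_of_lt ?_
    obtain ⟨⟨a', b'⟩, hc⟩ := c
    rw [IH _ hc]
    rcases Prod.lt_iff.1 hc with ⟨h1, h2⟩ | ⟨h1, h2⟩
    · exact nadd_lt_nadd_of_lt_of_le (IsWellFounded.rank_lt_of_rel h1) (rank_gt_antitoneAux h2)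
    · exact nadd_lt_nadd_of_le_of_lt (rank_gt_antitoneAux h1) (IsWellFounded.rank_lt_of_rel h2)
  · rw [nadd_le_iff]
    constructor
    · intro o ho
      rw [IsWellFounded.rank_eq, Ordinal.lt_iSup_iff] at ho
      obtain ⟨⟨a', ha'⟩, ho⟩ := ho
      rw [Order.lt_succ_iff] at ho
      have hp : ((a', b) : α × β) > (a, b) := Prod.lt_iff.2 (Or.inl ⟨ha', le_rfl⟩)
      calc o ♯ IsWellFounded.rank (α := β) (· > ·) b
          ≤ IsWellFounded.rank (α := α) (· > ·) a' ♯ IsWellFounded.rank (α := β) (· > ·) b :=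
            nadd_le_nadd ho le_rfl
        _ = IsWellFounded.rank (α := α × β) (· > ·) (a', b) := (IH _ hp).symm
        _ < _ := IsWellFounded.rank_lt_of_rel hp
    · intro o ho
      rw [IsWellFounded.rank_eq, Ordinal.lt_iSup_iff] at ho
      obtain ⟨⟨b', hb'⟩, ho⟩ := ho
      rw [Order.lt_succ_iff] at ho
      have hp : ((a, b') : α × β) > (a, b) := Prod.lt_iff.2 (Or.inr ⟨le_rfl, hb'⟩)
      calc IsWellFounded.rank (α := α) (· > ·) a ♯ o
          ≤ IsWellFounded.rank (α := α) (· > ·) a ♯ IsWellFounded.rank (α := β) (· > ·) b' :=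
            nadd_le_nadd le_rfl ho
        _ = IsWellFounded.rank (α := α × β) (· > ·) (a, b') := (IH _ hp).symm
        _ < _ := IsWellFounded.rank_lt_of_rel hp

end Aux

open Submodule in
theorem submodule_inl_snd_strictMono {R : Type*} [CommRing R]
    {N Q : Type v} [AddCommGroup N] [AddCommGroup Q] [Module R N] [Module R Q]
    {P P' : Submodule R (N × Q)} (h : P < P') :
    ((P.comap (LinearMap.inl R N Q), P.map (LinearMap.snd R N Q)) :
        Submodule R N × Submodule R Q) <
      (P'.comap (LinearMap.inl R N Q), P'.map (LinearMap.snd R N Q)) := by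
  refine lt_of_le_of_ne ⟨comap_mono h.le, map_mono h.le⟩ fun heq => ?_
  rw [Prod.mk.injEq] at heq
  obtain ⟨h1, h2⟩ := heq
  refine h.ne ?_
  apply le_antisymm h.le
  intro x hx
  obtain ⟨n, q⟩ := x
  have hq : q ∈ P'.map (LinearMap.snd R N Q) := ⟨(n, q), hx, rfl⟩
  rw [← h2] at hq
  obtain ⟨⟨n₁, q₁⟩, hy, hy2⟩ := hq
  simp only [LinearMap.snd_apply] at hy2
  subst hy2
  have hd : ((n - n₁, 0) : N × Q) ∈ P' := by
    have : ((n, q₁) : N × Q) - (n₁, q₁) ∈ P' := sub_mem hx (h.le hy)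
    simpa using this
  have hd' : n - n₁ ∈ P'.comap (LinearMap.inl R N Q) := hd
  rw [← h1] at hd'
  have : ((n, q₁) : N × Q) = (n - n₁, 0) + (n₁, q₁) := by simp
  rw [this]
  exact add_mem hd' hy

open Submodule in
theorem submodule_prod_strictMono {R : Type*} [CommRing R]
    {N Q : Type v} [AddCommGroup N] [AddCommGroup Q] [Module R N] [Module R Q]
    {A A' : Submodule R N} {B B' : Submodule R Q}
    (h : ((A, B) : Submodule R N × Submodule R Q) < (A', B')) :
    A.prod B < A'.prod B' := by
  refine lt_of_le_of_ne (prod_mono h.le.1 h.le.2) fun heq => ?_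
  refine h.ne ?_
  have hA : A = A' := by
    ext x
    constructor
    · intro hx; exact ((heq ▸ (show ((x, 0) : N × Q) ∈ A.prod B from ⟨hx, zero_mem B⟩)) : _).1
    · intro hx; exact ((heq.symm ▸ (show ((x, 0) : N × Q) ∈ A'.prod B' from ⟨hx, zero_mem B'⟩)) : _).1
  have hB : B = B' := by
    ext x
    constructor
    · intro hx; exact ((heq ▸ (show ((0, x) : N × Q) ∈ A.prod B from ⟨zero_mem A, hx⟩)) : _).2
    · intro hx; exact ((heq.symm ▸ (show ((0, x) : N × Q) ∈ A'.prod B' from ⟨zero_mem A', hx⟩)) : _).2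
  rw [hA, hB]

/-- The split case of semi-additivity: the ordinal length of a direct sum is the natural
(Hessenberg) sum of the ordinal lengths of the factors. -/
theorem moduleLength_prod
    (R : Type u) [CommRing R] [IsNoetherianRing R]
    (N Q : Type v) [AddCommGroup N] [AddCommGroup Q]
    [Module R N] [Module R Q] [Module.Finite R N] [Module.Finite R Q] :
    moduleLength R (N × Q) = moduleLength R N ♯ moduleLength R Q := by
  unfold moduleLength
  apply le_antisymm
  · have h1 := rank_le_of_relHomAux (r := (· > ·)) (s := (· > ·))
      (f := fun P : Submodule R (N × Q) =>
        ((P.comap (LinearMap.inl R N Q), P.map (LinearMap.snd R N Q)) :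
          Submodule R N × Submodule R Q))
      (fun _ _ hab => submodule_inl_snd_strictMono hab) ⊥
    have hbot : (((⊥ : Submodule R (N × Q)).comap (LinearMap.inl R N Q),
        (⊥ : Submodule R (N × Q)).map (LinearMap.snd R N Q)) :
          Submodule R N × Submodule R Q) = (⊥, ⊥) := by
      rw [Submodule.comap_bot, Submodule.map_bot, Submodule.ker_inl]
    rw [hbot] at h1
    exact h1.trans_eq (rank_gt_prodAux ((⊥, ⊥) : Submodule R N × Submodule R Q))
  · have h2 := rank_le_of_relHomAux (r := (· > ·)) (s := (· > ·))
      (f := fun p : Submodule R N × Submodule R Q => p.1.prod p.2)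
      (fun a b hab => by
        obtain ⟨A, B⟩ := a; obtain ⟨A', B'⟩ := b
        exact submodule_prod_strictMono hab)
      ((⊥, ⊥) : Submodule R N × Submodule R Q)
    simp only [Submodule.prod_bot] at h2
    exact (rank_gt_prodAux ((⊥, ⊥) : Submodule R N × Submodule R Q)).symm.trans_le h2
end

section
/- Let R be a Noetherian ring of finite Krull dimension and let x ∈ R be a non-zerodivisor that is not a unit. Then log_ω(len(R/xR)) < log_ω(len R); that is, the degree of the Cantor normal form of the ordinal length of R/xR is strictly less than that of the ordinal length of R. -/
open Ordinal

universe u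

set_option linter.unusedVariables false

theorem rank_le_rank_of_relHom {α β : Type u} {r : α → α → Prop} {s : β → β → Prop}
    [IsWellFounded α r] [IsWellFounded β s] (f : α → β)
    (hf : ∀ a b, r a b → s (f a) (f b)) (a : α) :
    IsWellFounded.rank r a ≤ IsWellFounded.rank s (f a) := by
  induction a using IsWellFounded.induction r with
  | _ a IH =>
    rw [IsWellFounded.rank_eq]
    apply Ordinal.iSup_le
    rintro ⟨b, hb⟩
    rw [Order.succ_le_iff]
    exact (IH b hb).trans_lt (IsWellFounded.rank_lt_of_rel (hf b a hb))

theorem quotient_add_rank_le {R M : Type u} [Ring R] [AddCommGroup M] [Module R M]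
    [IsNoetherian R M] (N : Submodule R M) (P : Submodule R N) :
    moduleLength R (M ⧸ N) + IsWellFounded.rank (α := Submodule R N) (· > ·) P ≤
      IsWellFounded.rank (α := Submodule R M) (· > ·) (P.map N.subtype) := by
  induction P using IsWellFounded.induction (α := Submodule R N) (· > ·) with
  | _ P IH =>
    rcases eq_or_ne P ⊤ with rfl | hP
    · have h0 : IsWellFounded.rank (α := Submodule R N) (· > ·) (⊤ : Submodule R N) = 0 := by
        apply le_antisymm _ (zero_le)
        rw [IsWellFounded.rank_eq]
        apply Ordinal.iSup_le
        rintro ⟨b, hb⟩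
        exact absurd hb (not_top_lt)
      rw [h0, add_zero]
      have := rank_le_rank_of_relHom (r := ((· > ·) : Submodule R (M ⧸ N) → _ → Prop))
        (s := ((· > ·) : Submodule R M → _ → Prop)) (Submodule.comap N.mkQ)
        (fun a b hab => Submodule.comap_strictMono_of_surjective N.mkQ_surjective hab)
        (⊥ : Submodule R (M ⧸ N))
      simpa [moduleLength, Submodule.comap_bot, Submodule.ker_mkQ,
        Submodule.map_subtype_top] using this
    · have hlt : P < ⊤ := lt_top_iff_ne_top.mpr hP
      have : Nonempty {b : Submodule R N // b > P} := ⟨⟨⊤, hlt⟩⟩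
      rw [IsWellFounded.rank_eq ((· > ·) : Submodule R N → _ → Prop) P,
        (isNormal_add_right _).map_iSup]
      apply Ordinal.iSup_le
      rintro ⟨Q, hQ⟩
      rw [Order.succ_eq_add_one, ← add_assoc, ← Order.succ_eq_add_one, Order.succ_le_iff]
      exact (IH Q hQ).trans_lt (IsWellFounded.rank_lt_of_rel
        (Submodule.map_strictMono_of_injective N.injective_subtype hQ))
      exact Ordinal.bddAbove_range _

theorem moduleLength_eq_of_equiv {R M M₂ : Type u} [Ring R] [AddCommGroup M] [Module R M]
    [AddCommGroup M₂] [Module R M₂] [IsNoetherian R M] [IsNoetherian R M₂] (e : M ≃ₗ[R] M₂) :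
    moduleLength R M = moduleLength R M₂ := by
  apply le_antisymm
  · have := rank_le_rank_of_relHom (r := ((· > ·) : Submodule R M → _ → Prop))
      (s := ((· > ·) : Submodule R M₂ → _ → Prop)) (Submodule.map (e : M →ₗ[R] M₂))
      (fun a b hab => Submodule.map_strictMono_of_injective e.injective hab) ⊥
    simpa [moduleLength, Submodule.map_bot] using this
  · have := rank_le_rank_of_relHom (r := ((· > ·) : Submodule R M₂ → _ → Prop))
      (s := ((· > ·) : Submodule R M → _ → Prop)) (Submodule.map (e.symm : M₂ →ₗ[R] M))
      (fun a b hab => Submodule.map_strictMono_of_injective e.symm.injective hab) ⊥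
    simpa [moduleLength, Submodule.map_bot] using this

theorem log_lt_log_of_add_eq {a b : Ordinal} (ha : 0 < a) (h : a + b = b) :
    Ordinal.log ω a < Ordinal.log ω b := by
  have hb : b ≠ 0 := by
    rintro rfl
    rw [add_zero] at h
    exact ha.ne' h
  set e := Ordinal.log ω a with he
  have h1 : ω ^ e + b = b := by
    apply le_antisymm _ (le_add_self)
    calc ω ^ e + b ≤ a + b := by
          exact add_le_add_left (Ordinal.opow_log_le_self ω ha.ne') b
      _ = b := h
  have hn : ∀ n : ℕ, ω ^ e * n + b = b := by
    intro n
    induction n with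
    | zero => simp
    | succ n ih =>
      have : ω ^ e * (n + 1 : ℕ) = ω ^ e * n + ω ^ e := by
        push_cast
        rw [mul_add, mul_one]
      rw [this, add_assoc, h1, ih]
  have hω : ω ^ (e + 1) ≤ b := by
    rw [← Order.succ_eq_add_one, Ordinal.opow_succ]
    rw [Ordinal.mul_le_iff_of_isSuccLimit Ordinal.isSuccLimit_omega0]
    intro c hc
    obtain ⟨n, rfl⟩ := Ordinal.lt_omega0.1 hc
    calc ω ^ e * n ≤ ω ^ e * n + b := le_self_add
      _ = b := hn n
  have := (Ordinal.opow_le_iff_le_log Ordinal.one_lt_omega0 hb).1 hω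
  exact lt_of_lt_of_le (Order.lt_succ e) (by rwa [Order.succ_eq_add_one])

/-- If `x` is a non-zerodivisor and a non-unit in a finite-dimensional Noetherian ring `R`,
then the degree (base-`ω` logarithm) of `len (R/xR)` is strictly less than that of `len R`. -/
theorem log_moduleLength_quotient_lt
    (R : Type u) [CommRing R] [IsNoetherianRing R] (hdim : ringKrullDim R < ⊤)
    (x : R) (hx : x ∈ nonZeroDivisors R) (hxu : ¬ IsUnit x) :
    Ordinal.log ω (moduleLength R (R ⧸ Ideal.span {x})) <
      Ordinal.log ω (moduleLength R R) := by
  have hnt : Nontrivial R := by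
    by_contra h
    rw [not_nontrivial_iff_subsingleton] at h
    exact hxu (isUnit_of_subsingleton x)
  -- linear equivalence R ≃ₗ span {x}
  have hinj : Function.Injective (LinearMap.toSpanSingleton R R x) := by
    intro a b hab
    simp only [LinearMap.toSpanSingleton_apply, _root_.smul_eq_mul] at hab
    exact (mul_cancel_right_mem_nonZeroDivisors hx).1 hab
  have hr : LinearMap.range (LinearMap.toSpanSingleton R R x) = Ideal.span {x} := by
    exact (LinearMap.span_singleton_eq_range R R x).symm
  let e : R ≃ₗ[R] ↥(Ideal.span {x} : Ideal R) :=
    (LinearEquiv.ofInjective _ hinj).trans (LinearEquiv.ofEq _ _ hr)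
  have h1 := quotient_add_rank_le (M := R) (Ideal.span {x}) ⊥
  rw [Submodule.map_bot] at h1
  have hlen : moduleLength R R =
      IsWellFounded.rank (α := Submodule R ↥(Ideal.span {x} : Ideal R)) (· > ·) ⊥ :=
    moduleLength_eq_of_equiv e
  rw [← hlen] at h1
  have heq : moduleLength R (R ⧸ Ideal.span {x}) + moduleLength R R = moduleLength R R :=
    le_antisymm h1 (le_add_self)
  have ha : 0 < moduleLength R (R ⧸ Ideal.span {x}) := by
    have hnt2 : Nontrivial (R ⧸ Ideal.span {x}) :=
      Ideal.Quotient.nontrivial_iff.mpr (by rwa [Ne, Ideal.span_singleton_eq_top])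
    have hbt : (⊥ : Submodule R (R ⧸ Ideal.span {x})) < ⊤ := bot_lt_top
    have := IsWellFounded.rank_lt_of_rel
      (r := ((· > ·) : Submodule R (R ⧸ Ideal.span {x}) → _ → Prop)) (a := ⊤) (b := ⊥) hbt
    exact (zero_le).trans_lt this
  exact log_lt_log_of_add_eq ha heq
end
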